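/- There exists a 4-player hedonic game admitting a partition that is both strict core stable and Nash stable, but in which no partition is strong Nash stable. -/

import Mathlib

open Finset

abbrev Pref (N : Type*) := N → Finset N → Finset N → Prop

def SPref {N : Type*} (pref : Pref N) (i : N) (S T : Finset N) : Prop :=
  pref i S T ∧ ¬ pref i T S

def IsHedonic {N : Type*} (pref : Pref N) : Prop :=
  (∀ (i : N) (S T : Finset N), i ∈ S → i ∈ T → pref i S T ∨ pref i T S) ∧
  (∀ (i : N) (S T U : Finset N), pref i S T → pref i T U → pref i S U)

section Defs

variable {N : Type*} [DecidableEq N] [Fintype N]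

def IsPartition (π : N → Finset N) : Prop :=
  (∀ i, i ∈ π i) ∧ ∀ i j, j ∈ π i → π j = π i

def Reachable (π π' : N → Finset N) (H : Finset N) : Prop :=
  π' ≠ π ∧ ∀ i j, i ∉ H → j ∉ H → i ≠ j → (π i = π j ↔ π' i = π' j)

def WeaklyBlocks (pref : Pref N) (π : N → Finset N) (S : Finset N) : Prop :=
  (∀ i ∈ S, pref i S (π i)) ∧ ∃ j ∈ S, SPref pref j S (π j)

def StrictCoreStable (pref : Pref N) (π : N → Finset N) : Prop :=
  ∀ S : Finset N, ¬ WeaklyBlocks pref π S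

def Blocks (pref : Pref N) (π : N → Finset N) (S : Finset N) : Prop :=
  S.Nonempty ∧ ∀ i ∈ S, SPref pref i S (π i)

def CoreStable (pref : Pref N) (π : N → Finset N) : Prop :=
  ∀ S : Finset N, ¬ Blocks pref π S

def StrongNashBlocks (pref : Pref N) (π : N → Finset N) (H : Finset N) : Prop :=
  H.Nonempty ∧ ∃ π' : N → Finset N, IsPartition π' ∧ Reachable π π' H ∧
    ∀ i ∈ H, SPref pref i (π' i) (π i)

def StrongNashStable (pref : Pref N) (π : N → Finset N) : Prop :=
  ∀ H : Finset N, ¬ StrongNashBlocks pref π H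

def StronglyIndividuallyBlocks (pref : Pref N) (π : N → Finset N) (H : Finset N) : Prop :=
  H.Nonempty ∧ ∃ π' : N → Finset N, IsPartition π' ∧ Reachable π π' H ∧
    (∀ i ∈ H, SPref pref i (π' i) (π i)) ∧
    ∀ j : N, (∃ i ∈ H, j ∈ π' i) → pref j (π' j) (π j)

def StronglyIndividuallyStable (pref : Pref N) (π : N → Finset N) : Prop :=
  ∀ H : Finset N, ¬ StronglyIndividuallyBlocks pref π H

def WeaklyNashBlocks (pref : Pref N) (π : N → Finset N) (H : Finset N) : Prop :=
  H.Nonempty ∧ ∃ π' : N → Finset N, IsPartition π' ∧ Reachable π π' H ∧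
    (∀ i ∈ H, pref i (π' i) (π i)) ∧ ∃ i ∈ H, SPref pref i (π' i) (π i)

def StrictlyStrongNashStable (pref : Pref N) (π : N → Finset N) : Prop :=
  ∀ H : Finset N, ¬ WeaklyNashBlocks pref π H

def NashStable (pref : Pref N) (π : N → Finset N) : Prop :=
  ∀ (i : N) (T : Finset N), (T = ∅ ∨ ∃ j, π j = T) → i ∉ T →
    ¬ SPref pref i (insert i T) (π i)

def IndividuallyStable (pref : Pref N) (π : N → Finset N) : Prop :=
  ∀ (i : N) (T : Finset N), (T = ∅ ∨ ∃ j, π j = T) → i ∉ T →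
    ¬ (SPref pref i (insert i T) (π i) ∧ ∀ j ∈ T, pref j (insert i T) T)

def ParetoOptimal (pref : Pref N) (π : N → Finset N) : Prop :=
  ∀ π' : N → Finset N, IsPartition π' → (∀ j, pref j (π' j) (π j)) →
    ¬ ∃ i, SPref pref i (π' i) (π i)

def PerfectPartition (pref : Pref N) (π : N → Finset N) : Prop :=
  ∀ (i : N) (S : Finset N), i ∈ S → pref i (π i) S

def ChoiceSets (pref : Pref N) (i : N) (X : Finset N) : Set (Finset N) :=
  {S' | S' ⊆ X ∧ i ∈ S' ∧ ∀ S'' ⊆ X, i ∈ S'' → pref i S' S''}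

def TopResponsiveWith (pref : Pref N) (ch : N → Finset N → Finset N) : Prop :=
  (∀ (i : N) (X : Finset N), i ∈ X → ChoiceSets pref i X = {ch i X}) ∧
  (∀ (i : N) (X Y : Finset N), i ∈ X → i ∈ Y →
      SPref pref i (ch i X) (ch i Y) → SPref pref i X Y) ∧
  (∀ (i : N) (X Y : Finset N), i ∈ X → i ∈ Y →
      ch i X = ch i Y → X ⊂ Y → SPref pref i X Y)

def MutualTop (ch : N → Finset N → Finset N) : Prop :=
  ∀ (i j : N) (X : Finset N), i ∈ X → j ∈ X → (i ∈ ch j X ↔ j ∈ ch i X)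

def AvoidSets (pref : Pref N) (i : N) (X : Finset N) : Set (Finset N) :=
  {S' | S' ⊆ X ∧ i ∈ S' ∧ ∀ S'' ⊆ X, i ∈ S'' → pref i S'' S'}

def BottomResponsive (pref : Pref N) : Prop :=
  (∀ (i : N) (X Y : Finset N), i ∈ X → i ∈ Y →
      (∀ X' ∈ AvoidSets pref i X, ∀ Y' ∈ AvoidSets pref i Y, SPref pref i X' Y') →
      SPref pref i X Y) ∧
  (∀ (i : N) (X Y : Finset N), i ∈ X → i ∈ Y →
      (AvoidSets pref i X ∩ AvoidSets pref i Y).Nonempty → Y.card ≤ X.card → pref i X Y)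

def StrongBottomResponsiveWith (pref : Pref N) (av : N → Finset N → Finset N) : Prop :=
  BottomResponsive pref ∧
    ∀ (i : N) (X : Finset N), i ∈ X → AvoidSets pref i X = {av i X}

def MutualBottom (av : N → Finset N → Finset N) : Prop :=
  ∀ (i j : N) (X : Finset N), i ∈ X → j ∈ X → (i ∈ av j X ↔ j ∈ av i X)

end Defs

namespace SNSExample

def u : Fin 4 → Finset (Fin 4) → ℕ := fun i S =>
  if S = (![{0,1},{1,2},{2,3},{0,3}] : Fin 4 → Finset (Fin 4)) i then 3
  else if S = (![{0,3},{0,1},{1,2},{2,3}] : Fin 4 → Finset (Fin 4)) i then 2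
  else if S = {i} then 1 else 0

def pr : Pref (Fin 4) := fun i S T => u i T ≤ u i S

instance decPr (i : Fin 4) (S T : Finset (Fin 4)) : Decidable (pr i S T) :=
  inferInstanceAs (Decidable (u i T ≤ u i S))

instance decSPref (i : Fin 4) (S T : Finset (Fin 4)) : Decidable (SPref pr i S T) :=
  inferInstanceAs (Decidable (pr i S T ∧ ¬ pr i T S))

instance decWB (π : Fin 4 → Finset (Fin 4)) (S : Finset (Fin 4)) :
    Decidable (WeaklyBlocks pr π S) :=
  inferInstanceAs (Decidable ((∀ i ∈ S, pr i S (π i)) ∧ ∃ j ∈ S, SPref pr j S (π j)))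

instance decSCS (π : Fin 4 → Finset (Fin 4)) : Decidable (StrictCoreStable pr π) :=
  inferInstanceAs (Decidable (∀ S, ¬ WeaklyBlocks pr π S))

instance decNS (π : Fin 4 → Finset (Fin 4)) : Decidable (NashStable pr π) :=
  inferInstanceAs (Decidable (∀ (i : Fin 4) (T : Finset (Fin 4)),
    (T = ∅ ∨ ∃ j, π j = T) → i ∉ T → ¬ SPref pr i (insert i T) (π i)))

instance decIsPart (π : Fin 4 → Finset (Fin 4)) : Decidable (IsPartition π) :=
  inferInstanceAs (Decidable ((∀ i, i ∈ π i) ∧ ∀ i j, j ∈ π i → π j = π i))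

instance decReach (π π' : Fin 4 → Finset (Fin 4)) (H : Finset (Fin 4)) :
    Decidable (Reachable π π' H) :=
  inferInstanceAs (Decidable (π' ≠ π ∧ ∀ i j, i ∉ H → j ∉ H → i ≠ j →
    (π i = π j ↔ π' i = π' j)))

def A : Fin 4 → Finset (Fin 4) := ![{0,1},{0,1},{2,3},{2,3}]
def B : Fin 4 → Finset (Fin 4) := ![{0,3},{1,2},{1,2},{0,3}]

lemma spref_iff (i : Fin 4) (S T : Finset (Fin 4)) :
    SPref pr i S T ↔ u i T < u i S :=
  ⟨fun h => not_le.mp h.2, fun h => ⟨h.le, not_le.mpr h⟩⟩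

lemma moveBlock (π τ : Fin 4 → Finset (Fin 4)) (hτ : IsPartition τ)
    (hne : ∃ i, π i ≠ τ i)
    (himp : ∀ i, π i ≠ τ i → SPref pr i (τ i) (π i)) :
    StrongNashBlocks pr π (Finset.univ.filter fun i => π i ≠ τ i) := by
  obtain ⟨k, hk⟩ := hne
  refine ⟨⟨k, Finset.mem_filter.mpr ⟨Finset.mem_univ k, hk⟩⟩, τ, hτ, ⟨?_, ?_⟩, ?_⟩
  · intro h; exact hk (congrFun h.symm k)
  · intro i j hi hj _
    have hi' : π i = τ i := by simpa using hi
    have hj' : π j = τ j := by simpa using hj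
    rw [hi', hj']
  · intro i hi
    exact himp i (by simpa using hi)

lemma d0 : ∀ S : Finset (Fin 4), 3 ≤ u 0 S → S = {0,1} := by decide
lemma d1 : ∀ S : Finset (Fin 4), 2 ≤ u 1 S → S ≠ {0,1} → S = {1,2} := by decide
lemma d2 : ∀ S : Finset (Fin 4), 3 ≤ u 2 S → S = {2,3} := by decide
lemma d3 : ∀ S : Finset (Fin 4), 2 ≤ u 3 S → S ≠ {2,3} → S = {0,3} := by decide
lemma e0 : ∀ S : Finset (Fin 4), S ≠ {0,3} → S ≠ {0,1} → u 0 S < 2 := by decide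
lemma g3 : ∀ S : Finset (Fin 4), S ≠ {0,3} → u 3 S < 3 := by decide
lemma f1 : ∀ S : Finset (Fin 4), S ≠ {1,2} → u 1 S < 3 := by decide
lemma f2 : ∀ S : Finset (Fin 4), S ≠ {1,2} → S ≠ {2,3} → u 2 S < 2 := by decide

lemma hPartA : IsPartition A := by decide
lemma hPartB : IsPartition B := by decide

end SNSExample

open SNSExample in
/-- There is a 4-player hedonic game admitting a partition that is both strict core
stable and Nash stable, but in which no partition is strong Nash stable. -/
theorem exists_game_SC_NS_but_no_SNS :
    ∃ pref : Pref (Fin 4), IsHedonic pref ∧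
      (∃ π : Fin 4 → Finset (Fin 4), IsPartition π ∧
        StrictCoreStable pref π ∧ NashStable pref π) ∧
      ∀ π : Fin 4 → Finset (Fin 4), IsPartition π → ¬ StrongNashStable pref π := by
  refine ⟨pr, ⟨fun i S T _ _ => le_total (u i T) (u i S),
      fun i S T U h1 h2 => le_trans h2 h1⟩,
    ⟨A, hPartA, by decide, by decide⟩, ?_⟩
  intro π hπ hSNS
  by_cases hA : ∀ i, π i = A i
  · have hπA : π = A := funext hA
    subst hπA
    exact hSNS {1, 3} ⟨by decide, B, hPartB, by decide, by decide⟩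
  by_cases hB : ∀ i, π i = B i
  · have hπB : π = B := funext hB
    subst hπB
    exact hSNS {0, 2} ⟨by decide, A, hPartA, by decide, by decide⟩
  by_cases hAimp : ∀ i, π i ≠ A i → SPref pr i (A i) (π i)
  · obtain ⟨k, hk⟩ := not_forall.mp hA
    exact hSNS _ (moveBlock π A hPartA ⟨k, hk⟩ hAimp)
  · push_neg at hAimp
    obtain ⟨i, hne, hnp⟩ := hAimp
    rw [spref_iff, not_lt] at hnp
    have hneB : ∃ i, π i ≠ B i := not_forall.mp hB
    fin_cases i
    · exact absurd (d0 _ hnp) hne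
    · -- π 1 = {1,2}
      have h1 : π 1 = {1, 2} := d1 _ hnp hne
      have h2 : π 2 = {1, 2} := by
        have := hπ.2 1 2 (by rw [h1]; decide)
        rw [this, h1]
      refine hSNS _ (moveBlock π B hPartB hneB ?_)
      intro j hj
      fin_cases j
      · rw [spref_iff]
        have hπ0 : π 0 ≠ {0, 1} := by
          intro h
          have := hπ.2 0 1 (by rw [h]; decide)
          rw [h1] at this; rw [h] at this; exact absurd this (by decide)
        have : u 0 (π 0) < 2 := e0 _ (by simpa [B] using hj) hπ0
        exact lt_of_lt_of_le this (by decide)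
      · exact absurd h1 (by simpa [B] using hj)
      · exact absurd h2 (by simpa [B] using hj)
      · rw [spref_iff]
        have : u 3 (π 3) < 3 := g3 _ (by simpa [B] using hj)
        simpa [B, u] using this
    · exact absurd (d2 _ hnp) hne
    · -- π 3 = {0,3}
      have h3 : π 3 = {0, 3} := d3 _ hnp hne
      have h0 : π 0 = {0, 3} := by
        have := hπ.2 3 0 (by rw [h3]; decide)
        rw [this, h3]
      refine hSNS _ (moveBlock π B hPartB hneB ?_)
      intro j hj
      fin_cases j
      · exact absurd h0 (by simpa [B] using hj)
      · rw [spref_iff]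
        have : u 1 (π 1) < 3 := f1 _ (by simpa [B] using hj)
        simpa [B, u] using this
      · rw [spref_iff]
        have hπ2 : π 2 ≠ {2, 3} := by
          intro h
          have := hπ.2 2 3 (by rw [h]; decide)
          rw [h3] at this; rw [h] at this; exact absurd this (by decide)
        have : u 2 (π 2) < 2 := f2 _ (by simpa [B] using hj) hπ2
        exact lt_of_lt_of_le this (by decide)
      · exact absurd h3 (by simpa [B] using hj)
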